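/- For every n ≥ 4, the book thickness of the complete graph K_n equals ⌈n/2⌉. -/

import Mathlib

open SimpleGraph

/-- A book embedding of `G` on `p` pages with respect to the linear order on the vertices
given by the injection `ord : V ↪ ℕ`: a symmetric page assignment of the edges to pages
`0, …, p-1` such that no two edges on the same page cross. -/
def IsBookEmbedding {V : Type*} (G : SimpleGraph V) (p : ℕ)
    (ord : V ↪ ℕ) (page : V → V → ℕ) : Prop :=
  (∀ a b, page a b = page b a) ∧
  (∀ a b, G.Adj a b → page a b < p) ∧
  (∀ a b c d, G.Adj a b → G.Adj c d → page a b = page c d →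
    ¬ (ord a < ord c ∧ ord c < ord b ∧ ord b < ord d))

/-- The book thickness of `G`: the least number of pages over all book embeddings. -/
noncomputable def bookThickness {V : Type*} (G : SimpleGraph V) : ℕ :=
  sInf {p | ∃ ord page, IsBookEmbedding G p ord page}


lemma noncross_bound (F : Finset (ℕ × ℕ))
    (hmem : ∀ e ∈ F, e.1 + 2 ≤ e.2)
    (hnc : ∀ e ∈ F, ∀ e' ∈ F, ¬ (e.1 < e'.1 ∧ e'.1 < e.2 ∧ e.2 < e'.2)) :
    ∀ w a b, b - a ≤ w → (F.filter (fun e => a ≤ e.1 ∧ e.2 ≤ b)).card ≤ b - a - 1 := by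
  intro w
  induction w with
  | zero =>
    intro a b hw
    have : F.filter (fun e => a ≤ e.1 ∧ e.2 ≤ b) = ∅ := by
      rw [Finset.eq_empty_iff_forall_notMem]
      intro e he
      rw [Finset.mem_filter] at he
      have := hmem e he.1
      omega
    simp [this]
  | succ w ih =>
    intro a b hw
    by_cases hba : b - a ≤ 2
    · -- base: filter ⊆ {(a, a+2)}
      by_cases hb2 : b = a + 2
      · have hsub : F.filter (fun e => a ≤ e.1 ∧ e.2 ≤ b) ⊆ {(a, b)} := by
          intro e he
          rw [Finset.mem_filter] at he
          have := hmem e he.1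
          rw [Finset.mem_singleton]
          have h1 : e.1 = a := by omega
          have h2 : e.2 = b := by omega
          exact Prod.ext h1 h2
        calc (F.filter (fun e => a ≤ e.1 ∧ e.2 ≤ b)).card ≤ 1 := by
              simpa using Finset.card_le_card hsub
          _ ≤ b - a - 1 := by omega
      · have : F.filter (fun e => a ≤ e.1 ∧ e.2 ≤ b) = ∅ := by
          rw [Finset.eq_empty_iff_forall_notMem]
          intro e he
          rw [Finset.mem_filter] at he
          have := hmem e he.1
          omega
        simp [this]
    · -- main: b ≥ a + 3
      set T := F.filter (fun e => e.1 = a ∧ e.2 < b) with hT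
      by_cases hTne : T.Nonempty
      · set d := (T.image Prod.snd).max' (hTne.image _) with hd
        have hdT : d ∈ T.image Prod.snd := Finset.max'_mem _ _
        obtain ⟨e₀, he₀T, he₀d⟩ := Finset.mem_image.mp hdT
        have he₀F : e₀ ∈ F := (Finset.mem_filter.mp he₀T).1
        have he₀1 : e₀.1 = a := (Finset.mem_filter.mp he₀T).2.1
        have he₀2 : e₀.2 < b := (Finset.mem_filter.mp he₀T).2.2
        have had : a + 2 ≤ d := by have := hmem e₀ he₀F; omega
        have hdb : d < b := by omega
        have hsub : F.filter (fun e => a ≤ e.1 ∧ e.2 ≤ b) ⊆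
            (F.filter (fun e => a ≤ e.1 ∧ e.2 ≤ d)) ∪
            (F.filter (fun e => d ≤ e.1 ∧ e.2 ≤ b)) ∪ {(a, b)} := by
          intro e he
          rw [Finset.mem_filter] at he
          obtain ⟨heF, ha1, hb1⟩ := he
          rw [Finset.mem_union, Finset.mem_union, Finset.mem_filter, Finset.mem_filter,
            Finset.mem_singleton]
          by_cases h1 : e.2 ≤ d
          · exact Or.inl (Or.inl ⟨heF, ha1, h1⟩)
          push_neg at h1
          by_cases h2 : e.1 = a
          · by_cases h3 : e.2 = b
            · exact Or.inr (Prod.ext h2 h3)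
            · exfalso
              have heT : e ∈ T := Finset.mem_filter.mpr ⟨heF, h2, by omega⟩
              have : e.2 ≤ d := Finset.le_max' _ _ (Finset.mem_image_of_mem _ heT)
              omega
          · have h4 : a < e.1 := by omega
            have h5 : d ≤ e.1 := by
              by_contra h6
              push_neg at h6
              exact hnc e₀ he₀F e heF (by omega)
            exact Or.inl (Or.inr ⟨heF, h5, hb1⟩)
        have hc1 := ih a d (by omega)
        have hc2 := ih d b (by omega)
        calc (F.filter (fun e => a ≤ e.1 ∧ e.2 ≤ b)).card
            ≤ ((F.filter (fun e => a ≤ e.1 ∧ e.2 ≤ d)) ∪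
               (F.filter (fun e => d ≤ e.1 ∧ e.2 ≤ b)) ∪ {(a, b)}).card :=
              Finset.card_le_card hsub
          _ ≤ ((F.filter (fun e => a ≤ e.1 ∧ e.2 ≤ d)) ∪
               (F.filter (fun e => d ≤ e.1 ∧ e.2 ≤ b))).card + 1 := by
              refine le_trans (Finset.card_union_le _ _) ?_
              simp
          _ ≤ (F.filter (fun e => a ≤ e.1 ∧ e.2 ≤ d)).card +
              (F.filter (fun e => d ≤ e.1 ∧ e.2 ≤ b)).card + 1 := by
              have := Finset.card_union_le (F.filter (fun e => a ≤ e.1 ∧ e.2 ≤ d))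
                (F.filter (fun e => d ≤ e.1 ∧ e.2 ≤ b))
              omega
          _ ≤ b - a - 1 := by omega
      · -- T empty
        have hsub : F.filter (fun e => a ≤ e.1 ∧ e.2 ≤ b) ⊆
            (F.filter (fun e => a + 1 ≤ e.1 ∧ e.2 ≤ b)) ∪ {(a, b)} := by
          intro e he
          rw [Finset.mem_filter] at he
          obtain ⟨heF, ha1, hb1⟩ := he
          rw [Finset.mem_union, Finset.mem_filter, Finset.mem_singleton]
          by_cases h2 : e.1 = a
          · by_cases h3 : e.2 = b
            · exact Or.inr (Prod.ext h2 h3)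
            · exfalso
              exact hTne ⟨e, Finset.mem_filter.mpr ⟨heF, h2, by omega⟩⟩
          · exact Or.inl ⟨heF, by omega, hb1⟩
        have hc1 := ih (a + 1) b (by omega)
        calc (F.filter (fun e => a ≤ e.1 ∧ e.2 ≤ b)).card
            ≤ ((F.filter (fun e => a + 1 ≤ e.1 ∧ e.2 ≤ b)) ∪ {(a, b)}).card :=
              Finset.card_le_card hsub
          _ ≤ (F.filter (fun e => a + 1 ≤ e.1 ∧ e.2 ≤ b)).card + 1 := by
              refine le_trans (Finset.card_union_le _ _) ?_
              simp
          _ ≤ b - a - 1 := by omega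

lemma noncross_bound' (F : Finset (ℕ × ℕ))
    (hmem : ∀ e ∈ F, e.1 + 2 ≤ e.2)
    (hnc : ∀ e ∈ F, ∀ e' ∈ F, ¬ (e.1 < e'.1 ∧ e'.1 < e.2 ∧ e.2 < e'.2))
    (a b : ℕ) (hab : (a, b) ∉ F) :
    (F.filter (fun e => a ≤ e.1 ∧ e.2 ≤ b)).card ≤ b - a - 2 := by
  by_cases hba : b - a ≤ 2
  · have : F.filter (fun e => a ≤ e.1 ∧ e.2 ≤ b) = ∅ := by
      rw [Finset.eq_empty_iff_forall_notMem]
      intro e he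
      rw [Finset.mem_filter] at he
      have h1 := hmem e he.1
      have h2 : e = (a, b) := Prod.ext (by omega) (by omega)
      exact hab (h2 ▸ he.1)
    simp [this]
  · set T := F.filter (fun e => e.1 = a ∧ e.2 < b) with hT
    by_cases hTne : T.Nonempty
    · set d := (T.image Prod.snd).max' (hTne.image _) with hd
      have hdT : d ∈ T.image Prod.snd := Finset.max'_mem _ _
      obtain ⟨e₀, he₀T, he₀d⟩ := Finset.mem_image.mp hdT
      have he₀F : e₀ ∈ F := (Finset.mem_filter.mp he₀T).1
      have he₀1 : e₀.1 = a := (Finset.mem_filter.mp he₀T).2.1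
      have he₀2 : e₀.2 < b := (Finset.mem_filter.mp he₀T).2.2
      have had : a + 2 ≤ d := by have := hmem e₀ he₀F; omega
      have hdb : d < b := by omega
      have hsub : F.filter (fun e => a ≤ e.1 ∧ e.2 ≤ b) ⊆
          (F.filter (fun e => a ≤ e.1 ∧ e.2 ≤ d)) ∪
          (F.filter (fun e => d ≤ e.1 ∧ e.2 ≤ b)) := by
        intro e he
        rw [Finset.mem_filter] at he
        obtain ⟨heF, ha1, hb1⟩ := he
        rw [Finset.mem_union, Finset.mem_filter, Finset.mem_filter]
        by_cases h1 : e.2 ≤ d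
        · exact Or.inl ⟨heF, ha1, h1⟩
        push_neg at h1
        by_cases h2 : e.1 = a
        · exfalso
          by_cases h3 : e.2 = b
          · exact hab (show (a, b) ∈ F from (Prod.ext h2 h3 : e = (a, b)) ▸ heF)
          · have heT : e ∈ T := Finset.mem_filter.mpr ⟨heF, h2, by omega⟩
            have : e.2 ≤ d := Finset.le_max' _ _ (Finset.mem_image_of_mem _ heT)
            omega
        · have h4 : a < e.1 := by omega
          have h5 : d ≤ e.1 := by
            by_contra h6
            push_neg at h6
            exact hnc e₀ he₀F e heF (by omega)
          exact Or.inr ⟨heF, h5, hb1⟩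
      have hc1 := noncross_bound F hmem hnc (d - a) a d (le_refl _)
      have hc2 := noncross_bound F hmem hnc (b - d) d b (le_refl _)
      calc (F.filter (fun e => a ≤ e.1 ∧ e.2 ≤ b)).card
          ≤ ((F.filter (fun e => a ≤ e.1 ∧ e.2 ≤ d)) ∪
             (F.filter (fun e => d ≤ e.1 ∧ e.2 ≤ b))).card := Finset.card_le_card hsub
        _ ≤ (F.filter (fun e => a ≤ e.1 ∧ e.2 ≤ d)).card +
            (F.filter (fun e => d ≤ e.1 ∧ e.2 ≤ b)).card := Finset.card_union_le _ _
        _ ≤ b - a - 2 := by omega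
    · have hsub : F.filter (fun e => a ≤ e.1 ∧ e.2 ≤ b) ⊆
          F.filter (fun e => a + 1 ≤ e.1 ∧ e.2 ≤ b) := by
        intro e he
        rw [Finset.mem_filter] at he
        obtain ⟨heF, ha1, hb1⟩ := he
        rw [Finset.mem_filter]
        by_cases h2 : e.1 = a
        · exfalso
          by_cases h3 : e.2 = b
          · exact hab (show (a, b) ∈ F from (Prod.ext h2 h3 : e = (a, b)) ▸ heF)
          · exact hTne ⟨e, Finset.mem_filter.mpr ⟨heF, h2, by omega⟩⟩
        · exact ⟨heF, by omega, hb1⟩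
      have hc1 := noncross_bound F hmem hnc (b - (a + 1)) (a + 1) b (le_refl _)
      calc (F.filter (fun e => a ≤ e.1 ∧ e.2 ≤ b)).card
          ≤ (F.filter (fun e => a + 1 ≤ e.1 ∧ e.2 ≤ b)).card := Finset.card_le_card hsub
        _ ≤ b - a - 2 := by omega

lemma mod_split (S m : ℕ) (hm : 0 < m) (h2 : S < 2 * m) : S % m = S ∨ S % m + m = S := by
  rcases Nat.lt_or_ge S m with h | h
  · left; exact Nat.mod_eq_of_lt h
  · right
    have hlt : S - m < m := by omega
    have heq := Nat.mod_eq_sub_mod h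
    rw [heq, Nat.mod_eq_of_lt hlt]
    omega


lemma upper_emb (n : ℕ) (hn : 4 ≤ n) :
    IsBookEmbedding (⊤ : SimpleGraph (Fin n)) ((n + 1) / 2)
      ⟨Fin.val, Fin.val_injective⟩
      (fun a b => ((a.val + b.val) % (2 * ((n + 1) / 2))) / 2) := by
  set m := 2 * ((n + 1) / 2) with hm
  have hmn : n ≤ m ∧ m ≤ n + 1 ∧ 4 ≤ m := by omega
  refine ⟨fun a b => by dsimp only; rw [Nat.add_comm], ?_, ?_⟩
  · intro a b _
    show ((a.val + b.val) % m) / 2 < (n + 1) / 2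
    have hx : (a.val + b.val) % m < m := Nat.mod_lt _ (by omega)
    omega
  · intro a b c d _ _ hpage hcross
    obtain ⟨h1, h2, h3⟩ := hcross
    simp only [Function.Embedding.coeFn_mk] at h1 h2 h3
    have hpg : ((a.val + b.val) % m) / 2 = ((c.val + d.val) % m) / 2 := hpage
    have hb : b.val < n := b.isLt
    have hd : d.val < n := d.isLt
    have hc : c.val < n := c.isLt
    have hsplit1 := mod_split (a.val + b.val) m (by omega) (by omega)
    have hsplit2 := mod_split (c.val + d.val) m (by omega) (by omega)
    omega

lemma sum_shift : ∀ k : ℕ, (∑ j ∈ Finset.range (k + 1), (j - 1)) = ∑ j ∈ Finset.range k, j := by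
  intro k
  induction k with
  | zero => simp
  | succ k ih => rw [Finset.sum_range_succ, ih, Finset.sum_range_succ]; omega


lemma lower_bound (n : ℕ) (hn : 4 ≤ n) (p : ℕ) (ord : Fin n ↪ ℕ) (page : Fin n → Fin n → ℕ)
    (hemb : IsBookEmbedding (⊤ : SimpleGraph (Fin n)) p ord page) :
    (n + 1) / 2 ≤ p := by
  obtain ⟨hsym, hlt, hncr⟩ := hemb
  have hn0 : 0 < n := by omega
  -- sorted permutation
  obtain ⟨σ, hσ⟩ : ∃ σ : Equiv.Perm (Fin n), StrictMono (fun i => ord (σ i)) := by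
    refine ⟨Tuple.sort ord, ?_⟩
    exact (Tuple.monotone_sort ⇑ord).strictMono_of_injective
      (ord.injective.comp (Equiv.injective _))
  set v : ℕ → Fin n := fun i => σ ⟨i % n, Nat.mod_lt _ hn0⟩ with hv
  have hvinj : ∀ i j, i < n → j < n → v i = v j → i = j := by
    intro i j hi hj hij
    have := σ.injective hij
    have := Fin.mk.injEq (i % n) _ (j % n) _ ▸ this
    rw [Nat.mod_eq_of_lt hi, Nat.mod_eq_of_lt hj] at this
    omega
  have hmono : ∀ i j, i < n → j < n → i < j → ord (v i) < ord (v j) := by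
    intro i j hi hj hij
    exact hσ (a := ⟨i % n, Nat.mod_lt i hn0⟩) (b := ⟨j % n, Nat.mod_lt j hn0⟩)
      (by rw [Fin.mk_lt_mk, Nat.mod_eq_of_lt hi, Nat.mod_eq_of_lt hj]; exact hij)
  have hvlt : ∀ i j, i < n → j < n → (i < j ↔ ord (v i) < ord (v j)) := by
    intro i j hi hj
    constructor
    · exact hmono i j hi hj
    · intro h
      by_contra hc
      push_neg at hc
      rcases Nat.lt_or_ge j i with h2 | h2
      · have := hmono j i hj hi h2
        omega
      · have : i = j := by omega
        subst this; omega
  set pg : ℕ × ℕ → ℕ := fun e => page (v e.1) (v e.2) with hpg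
  set A : Finset (ℕ × ℕ) :=
    (Finset.range n).biUnion (fun j => (Finset.range (j - 1)).image (fun i => (i, j))) with hA
  have hAmem : ∀ e : ℕ × ℕ, e ∈ A ↔ (e.1 + 2 ≤ e.2 ∧ e.2 < n) := by
    intro e
    simp only [hA, Finset.mem_biUnion, Finset.mem_image, Finset.mem_range]
    constructor
    · rintro ⟨j, hj, i, hi, rfl⟩
      simp only
      omega
    · rintro ⟨h1, h2⟩
      exact ⟨e.2, h2, e.1, by omega, rfl⟩
  have hcardA : 2 * A.card = (n - 1) * (n - 2) := by
    rw [hA, Finset.card_biUnion]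
    · have hc : ∀ j ∈ Finset.range n, ((Finset.range (j - 1)).image (fun i => (i, j))).card
          = j - 1 := by
        intro j _
        rw [Finset.card_image_of_injective _ (fun x y hxy => (Prod.mk.injEq _ _ _ _).mp hxy |>.1)]
        simp
      rw [Finset.sum_congr rfl hc]
      obtain ⟨k, rfl⟩ : ∃ k, n = k + 1 := ⟨n - 1, by omega⟩
      rw [sum_shift]
      have hg := Finset.sum_range_id_mul_two k
      have h4 : k + 1 - 1 = k := rfl
      have h5 : k + 1 - 2 = k - 1 := by omega
      rw [h4, h5]
      linarith
    · intro x _ y _ hxy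
      rw [Function.onFun, Finset.disjoint_left]
      intro e he he'
      simp only [Finset.mem_image, Finset.mem_range] at he he'
      obtain ⟨i, _, rfl⟩ := he
      obtain ⟨i', _, heq⟩ := he'
      exact hxy ((Prod.mk.injEq _ _ _ _).mp heq.symm |>.2.symm ▸ rfl)
  have hmemA : (0, n - 1) ∈ A := (hAmem _).mpr (by simp; omega)
  set C : Finset (ℕ × ℕ) := A.erase (0, n - 1) with hC
  have hcardC : C.card = A.card - 1 := Finset.card_erase_of_mem hmemA
  have hClt : ∀ e ∈ C, e.1 + 2 ≤ e.2 ∧ e.2 < n := fun e he =>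
    (hAmem e).mp (Finset.mem_of_mem_erase he)
  have hpg_lt : ∀ e ∈ C, pg e < p := by
    intro e he
    obtain ⟨h1, h2⟩ := hClt e he
    apply hlt
    rw [top_adj]
    intro hcon
    have := hvinj e.1 e.2 (by omega) (by omega) hcon
    omega
  -- per page bound
  have hpage_bound : ∀ k, (C.filter (fun e => pg e = k)).card ≤ n - 3 := by
    intro k
    set F := C.filter (fun e => pg e = k) with hF
    have hmemF : ∀ e ∈ F, e.1 + 2 ≤ e.2 ∧ e.2 < n := fun e he =>
      hClt e (Finset.mem_filter.mp he).1
    have hnc : ∀ e ∈ F, ∀ e' ∈ F, ¬ (e.1 < e'.1 ∧ e'.1 < e.2 ∧ e.2 < e'.2) := by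
      intro e he e' he' ⟨hx1, hx2, hx3⟩
      obtain ⟨he1, he2⟩ := hmemF e he
      obtain ⟨he1', he2'⟩ := hmemF e' he'
      have hk : pg e = k := (Finset.mem_filter.mp he).2
      have hk' : pg e' = k := (Finset.mem_filter.mp he').2
      refine hncr (v e.1) (v e.2) (v e'.1) (v e'.2) ?_ ?_ (hk.trans hk'.symm)
        ⟨?_, ?_, ?_⟩
      · rw [top_adj]; intro hcon; have := hvinj e.1 e.2 (by omega) (by omega) hcon; omega
      · rw [top_adj]; intro hcon; have := hvinj e'.1 e'.2 (by omega) (by omega) hcon; omega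
      · exact (hvlt e.1 e'.1 (by omega) (by omega)).mp hx1
      · exact (hvlt e'.1 e.2 (by omega) (by omega)).mp hx2
      · exact (hvlt e.2 e'.2 (by omega) (by omega)).mp hx3
    have hab : (0, n - 1) ∉ F := by
      intro hcon
      exact (Finset.notMem_erase _ _) (Finset.mem_filter.mp hcon).1
    have hfull : F.filter (fun e => 0 ≤ e.1 ∧ e.2 ≤ n - 1) = F := by
      apply Finset.filter_true_of_mem
      intro e he
      have := hmemF e he
      omega
    have := noncross_bound' F (fun e he => (hmemF e he).1) hnc 0 (n - 1) hab
    rw [hfull] at this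
    omega
  -- total
  have hsub : C ⊆ (Finset.range p).biUnion (fun k => C.filter (fun e => pg e = k)) := by
    intro e he
    exact Finset.mem_biUnion.mpr ⟨pg e, Finset.mem_range.mpr (hpg_lt e he),
      Finset.mem_filter.mpr ⟨he, rfl⟩⟩
  have htot : C.card ≤ p * (n - 3) := by
    calc C.card ≤ ((Finset.range p).biUnion (fun k => C.filter (fun e => pg e = k))).card :=
          Finset.card_le_card hsub
      _ ≤ ∑ k ∈ Finset.range p, (C.filter (fun e => pg e = k)).card := Finset.card_biUnion_le
      _ ≤ (Finset.range p).card • (n - 3) :=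
          Finset.sum_le_card_nsmul _ _ _ (fun k _ => hpage_bound k)
      _ = p * (n - 3) := by rw [Finset.card_range, smul_eq_mul]
  -- arithmetic finish
  have hA1 : 1 ≤ A.card := Finset.card_pos.mpr ⟨_, hmemA⟩
  obtain ⟨q, rfl⟩ : ∃ q, n = q + 4 := ⟨n - 4, by omega⟩
  have key : (q + 4) * (q + 1) ≤ (2 * p) * (q + 1) := by
    have h1 : (q + 4 - 1) * (q + 4 - 2) = (q + 4) * (q + 1) + 2 := by
      have : (q + 3) * (q + 2) = (q + 4) * (q + 1) + 2 := by ring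
      simpa using this
    have h2 : 2 * C.card ≤ 2 * (p * (q + 4 - 3)) := by omega
    have h3 : (2 : ℕ) * (p * (q + 4 - 3)) = (2 * p) * (q + 1) := by
      have : q + 4 - 3 = q + 1 := by omega
      rw [this]; ring
    omega
  have hnp : q + 4 ≤ 2 * p := Nat.le_of_mul_le_mul_right key (by omega)
  omega

/-- For every `n ≥ 4`, the book thickness of the complete graph `K_n` equals `⌈n/2⌉`. -/
theorem bookThickness_completeGraph (n : ℕ) (hn : 4 ≤ n) :
    bookThickness (⊤ : SimpleGraph (Fin n)) = (n + 1) / 2 := by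
  have hub : ((n + 1) / 2) ∈ {p | ∃ ord page, IsBookEmbedding (⊤ : SimpleGraph (Fin n)) p ord page} :=
    ⟨_, _, upper_emb n hn⟩
  refine le_antisymm (Nat.sInf_le hub) (le_csInf ⟨_, hub⟩ ?_)
  rintro p ⟨ord, page, hemb⟩
  exact lower_bound n hn p ord page hemb
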